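/- Every positive integer is represented by the quaternary quadratic form x² + y² + z² + 5w²; that is, for every n ≥ 1 there exist integers x, y, z, w with n = x² + y² + z² + 5w². Equivalently, the coefficient of q^n in φ(q)³φ(q⁵) is positive for all n ≥ 0, where φ(q) = ∑_{k∈ℤ} q^{k²}. -/

import Mathlib

/-- value of ternary quadratic form -/
def qval (a b c f g h x y z : ℤ) : ℤ :=
  a*x^2 + b*y^2 + c*z^2 + 2*f*y*z + 2*g*x*z + 2*h*x*y

/-- discriminant (determinant of Gram matrix) -/
def qdisc (a b c f g h : ℤ) : ℤ := a*b*c + 2*f*g*h - a*f^2 - b*g^2 - c*h^2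

lemma qval_posdef (a b c f g h : ℤ) (ha : 0 < a) (hd2 : 0 < a*b - h^2)
    (hd : 0 < qdisc a b c f g h) :
    ∀ x y z : ℤ, ¬(x = 0 ∧ y = 0 ∧ z = 0) → 0 < qval a b c f g h x y z := by
  intro x y z hv
  by_contra hle
  push_neg at hle
  have key : a * (a*b - h^2) * qval a b c f g h x y z =
      (a*b - h^2) * (a*x + h*y + g*z)^2 + ((a*b - h^2)*y + (a*f - g*h)*z)^2
        + a * qdisc a b c f g h * z^2 := by
    unfold qval qdisc; ring
  have had : 0 < a * (a*b - h^2) := mul_pos ha hd2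
  have hF : a * (a*b - h^2) * qval a b c f g h x y z ≤ 0 := by
    rcases lt_or_eq_of_le hle with h' | h'
    · nlinarith
    · rw [h']; simp
  have h1 : (a*b - h^2) * (a*x + h*y + g*z)^2 ≥ 0 := by positivity
  have h2 : ((a*b - h^2)*y + (a*f - g*h)*z)^2 ≥ 0 := by positivity
  have h3 : a * qdisc a b c f g h * z^2 ≥ 0 := by positivity
  have hadisc : 0 < a * qdisc a b c f g h := mul_pos ha hd
  have hz2 : z^2 ≤ 0 := by nlinarith
  have hz : z = 0 := by nlinarith [sq_nonneg z]
  subst hz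
  have hy2 : ((a*b - h^2)*y)^2 ≤ 0 := by nlinarith
  have hy : y = 0 := by
    have : (a*b - h^2)*y = 0 := by nlinarith [sq_nonneg ((a*b - h^2)*y)]
    rcases mul_eq_zero.mp this with h' | h'
    · omega
    · exact h'
  subst hy
  have hx2 : (a*x)^2 ≤ 0 := by nlinarith
  have hx : x = 0 := by
    have : a*x = 0 := by nlinarith [sq_nonneg (a*x)]
    rcases mul_eq_zero.mp this with h' | h'
    · omega
    · exact h'
  exact hv ⟨hx, rfl, rfl⟩

/-- binary form small-value lemma (Hermite reduction for binary forms) -/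
lemma binary_small_aux (k : ℕ) : ∀ a h b : ℤ, a.natAbs ≤ k → 0 < a → 0 < a*b - h^2 →
    ∃ y z : ℤ, ¬(y = 0 ∧ z = 0) ∧ 0 < a*y^2 + 2*h*y*z + b*z^2 ∧
      3*(a*y^2 + 2*h*y*z + b*z^2)^2 ≤ 4*(a*b - h^2) := by
  induction k with
  | zero => intro a h b hk ha _; exfalso; omega
  | succ K IH =>
    intro a h b hk ha hd
    -- division with minimal remainder
    obtain ⟨q', r', hqr, hr1, hr2⟩ : ∃ q' r' : ℤ, h = a*q' + r' ∧ -a ≤ 2*r' ∧ 2*r' ≤ a := by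
      have h1 := Int.emod_add_mul_ediv h a
      have h2 := Int.emod_nonneg h (by omega : a ≠ 0)
      have h3 := Int.emod_lt_of_pos h ha
      by_cases hc : 2*(h % a) ≤ a
      · exact ⟨h / a, h % a, by linarith, by linarith, hc⟩
      · exact ⟨h / a + 1, h % a - a, by linear_combination -h1, by omega, by omega⟩
    obtain ⟨b', hb'⟩ : ∃ B : ℤ, B = a*q'^2 - 2*h*q' + b := ⟨_, rfl⟩
    have hdet' : a*b' - r'^2 = a*b - h^2 := by rw [hb', hqr]; ring
    have hr2' : 4*r'^2 ≤ a^2 := by nlinarith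
    by_cases hcase : b' < a
    · have hbpos : 0 < b' := by nlinarith
      have hlt : b'.natAbs ≤ K := by clear hb' hdet'; omega
      obtain ⟨y, z, hyz, hpos, hbound⟩ := IH b' r' a hlt hbpos (by nlinarith)
      refine ⟨z - q'*y, y, ?_, ?_, ?_⟩
      · rintro ⟨h1, h2⟩
        subst h2
        exact hyz ⟨rfl, by simpa using h1⟩
      · have he : a*(z - q'*y)^2 + 2*h*(z - q'*y)*y + b*y^2 = b'*y^2 + 2*r'*y*z + a*z^2 := by
          rw [hb', hqr]; ring
        linarith [he, hpos]
      · have he : a*(z - q'*y)^2 + 2*h*(z - q'*y)*y + b*y^2 = b'*y^2 + 2*r'*y*z + a*z^2 := by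
          rw [hb', hqr]; ring
        rw [he]
        calc 3*(b'*y^2 + 2*r'*y*z + a*z^2)^2 ≤ 4*(b'*a - r'^2) := hbound
        _ = 4*(a*b - h^2) := by rw [← hdet']; ring
    · push_neg at hcase
      refine ⟨1, 0, by simp, by simpa using ha, ?_⟩
      have : a*1^2 + 2*h*1*0 + b*0^2 = a := by ring
      rw [this]
      nlinarith

lemma binary_small (a h b : ℤ) (ha : 0 < a) (hd : 0 < a*b - h^2) :
    ∃ y z : ℤ, ¬(y = 0 ∧ z = 0) ∧ 0 < a*y^2 + 2*h*y*z + b*z^2 ∧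
      3*(a*y^2 + 2*h*y*z + b*z^2)^2 ≤ 4*(a*b - h^2) :=
  binary_small_aux a.natAbs a h b le_rfl ha hd

/-- binary positive definite forms of determinant 1 represent only sums of two squares -/
lemma binary_det_one (a h b : ℤ) (ha : 0 < a) (hd : a*b - h^2 = 1) (k y z : ℤ)
    (hk : a*y^2 + 2*h*y*z + b*z^2 = k) : ∃ s t : ℤ, k = s^2 + t^2 := by
  obtain ⟨y₀, z₀, hyz, hpos, hbound⟩ := binary_small a h b ha (by omega)
  set Q := a*y₀^2 + 2*h*y₀*z₀ + b*z₀^2 with hQ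
  have hQ1 : Q = 1 := by nlinarith
  -- y₀, z₀ coprime
  have hcop : Int.gcd y₀ z₀ = 1 := by
    set d := Int.gcd y₀ z₀ with hdd
    have hdvd1 : (d:ℤ) ∣ y₀ := Int.gcd_dvd_left _ _
    have hdvd2 : (d:ℤ) ∣ z₀ := Int.gcd_dvd_right _ _
    obtain ⟨y₁, hy₁⟩ := hdvd1
    obtain ⟨z₁, hz₁⟩ := hdvd2
    have hd0 : d ≠ 0 := by
      intro h0
      rw [h0] at hy₁ hz₁; push_cast at hy₁ hz₁
      exact hyz ⟨by omega, by omega⟩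
    have hfac : Q = (d:ℤ)^2 * (a*y₁^2 + 2*h*y₁*z₁ + b*z₁^2) := by
      rw [hQ, hy₁, hz₁]; ring
    have hpos1 : 0 < a*y₁^2 + 2*h*y₁*z₁ + b*z₁^2 := by
      nlinarith [hfac, hQ1, sq_nonneg (d:ℤ)]
    have : (d:ℤ)^2 ≤ 1 := by nlinarith
    have hd1 : (1:ℤ) ≤ (d:ℤ) := by exact_mod_cast Nat.one_le_iff_ne_zero.mpr hd0
    have : (d:ℤ) = 1 := by nlinarith
    exact_mod_cast this
  obtain ⟨u, v, huv⟩ : ∃ u v : ℤ, y₀ * v - z₀ * u = 1 := by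
    have hbez := Int.gcd_eq_gcd_ab y₀ z₀
    rw [hcop] at hbez
    push_cast at hbez
    exact ⟨-Int.gcdB y₀ z₀, Int.gcdA y₀ z₀, by linarith [hbez]⟩
  -- change of basis: (y,z) = (y₀ Y + u Z, z₀ Y + v Z)
  set h' := a*y₀*u + h*(y₀*v + z₀*u) + b*z₀*v with hh'
  set b' := a*u^2 + 2*h*u*v + b*v^2 with hbb'
  have hdet2 : Q*b' - h'^2 = (a*b - h^2)*(y₀*v - z₀*u)^2 := by
    rw [hQ, hbb', hh']; ring
  rw [hd, huv] at hdet2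
  have hb'1 : b' - h'^2 = 1 := by rw [hQ1] at hdet2; linarith
  set Y := v*y - u*z with hY
  set Z := -z₀*y + y₀*z with hZ
  have hsub1 : y = y₀*Y + u*Z := by rw [hY, hZ]; linear_combination (-y) * huv
  have hsub2 : z = z₀*Y + v*Z := by rw [hY, hZ]; linear_combination (-z) * huv
  have hval : k = Q*Y^2 + 2*h'*Y*Z + b'*Z^2 := by
    rw [← hk, hQ, hh', hbb']
    nth_rewrite 1 [hsub1, hsub2]
    nth_rewrite 1 [hsub1]
    nth_rewrite 1 [hsub2]
    ring
  refine ⟨Y + h'*Z, Z, ?_⟩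
  rw [hval, hQ1]
  linear_combination Z^2 * hb'1

-- Cramer-style lemmas for explicit 3x3 matrices with det 1, columns (x,y,z),(t12,t22,t32),(t13,t23,t33)
section cramer
variable (x y z t12 t13 t22 t23 t32 t33 : ℤ)

lemma inj3 (hdet : x*(t22*t33 - t23*t32) - t12*(y*t33 - t23*z) + t13*(y*t32 - t22*z) = 1)
    (U V W : ℤ) (h1 : x*U + t12*V + t13*W = 0) (h2 : y*U + t22*V + t23*W = 0)
    (h3 : z*U + t32*V + t33*W = 0) : U = 0 ∧ V = 0 ∧ W = 0 := by
  refine ⟨?_, ?_, ?_⟩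
  · linear_combination (t22*t33 - t23*t32)*h1 - (t12*t33 - t13*t32)*h2 + (t12*t23 - t13*t22)*h3 - U*hdet
  · linear_combination (-(y*t33 - t23*z))*h1 + (x*t33 - t13*z)*h2 - (x*t23 - t13*y)*h3 - V*hdet
  · linear_combination (y*t32 - t22*z)*h1 - (x*t32 - t12*z)*h2 + (x*t22 - t12*y)*h3 - W*hdet

lemma solve3 (hdet : x*(t22*t33 - t23*t32) - t12*(y*t33 - t23*z) + t13*(y*t32 - t22*z) = 1)
    (X Y Z : ℤ) : ∃ U V W : ℤ, x*U + t12*V + t13*W = X ∧ y*U + t22*V + t23*W = Y ∧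
      z*U + t32*V + t33*W = Z := by
  refine ⟨(t22*t33 - t23*t32)*X - (t12*t33 - t13*t32)*Y + (t12*t23 - t13*t22)*Z,
    -(y*t33 - t23*z)*X + (x*t33 - t13*z)*Y - (x*t23 - t13*y)*Z,
    (y*t32 - t22*z)*X - (x*t32 - t12*z)*Y + (x*t22 - t12*y)*Z, ?_, ?_, ?_⟩
  · linear_combination X*hdet
  · linear_combination Y*hdet
  · linear_combination Z*hdet

end cramer

/-- a primitive vector extends to a matrix of determinant 1 -/
lemma completion (x y z : ℤ) (hg : Int.gcd x (Int.gcd y z : ℤ) = 1) :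
    ∃ t12 t13 t22 t23 t32 t33 : ℤ,
      x*(t22*t33 - t23*t32) - t12*(y*t33 - t23*z) + t13*(y*t32 - t22*z) = 1 := by
  by_cases hg0 : Int.gcd y z = 0
  · obtain ⟨hy, hz⟩ := Int.gcd_eq_zero_iff.mp hg0
    subst hy; subst hz
    rw [hg0] at hg
    have hx : x = 1 ∨ x = -1 := by
      have : x.natAbs = 1 := by simpa using hg
      omega
    refine ⟨0, 0, 1, 0, 0, x, ?_⟩
    rcases hx with h | h <;> subst h <;> ring
  · -- g ≥ 1
    obtain ⟨s, t, hst⟩ : ∃ s t : ℤ, x*s + (Int.gcd y z : ℤ)*t = 1 := by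
      have hbez := Int.gcd_eq_gcd_ab x (Int.gcd y z : ℤ)
      rw [hg] at hbez
      push_cast at hbez
      exact ⟨Int.gcdA x (Int.gcd y z : ℤ), Int.gcdB x (Int.gcd y z : ℤ), by linarith⟩
    obtain ⟨A, hA⟩ : ∃ A : ℤ, A = Int.gcdA y z := ⟨_, rfl⟩
    obtain ⟨B, hB⟩ : ∃ B : ℤ, B = Int.gcdB y z := ⟨_, rfl⟩
    have hby : (Int.gcd y z : ℤ) = y*A + z*B := by rw [hA, hB]; exact Int.gcd_eq_gcd_ab y z
    obtain ⟨y₁, hy₁⟩ : ((Int.gcd y z : ℤ)) ∣ y := Int.gcd_dvd_left _ _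
    obtain ⟨z₁, hz₁⟩ : ((Int.gcd y z : ℤ)) ∣ z := Int.gcd_dvd_right _ _
    have hgz : (Int.gcd y z : ℤ) ≠ 0 := by exact_mod_cast hg0
    have huv : y₁*A + z₁*B = 1 := by
      have h2 : (Int.gcd y z : ℤ) * (y₁*A + z₁*B) = (Int.gcd y z : ℤ) * 1 := by
        calc (Int.gcd y z : ℤ) * (y₁*A + z₁*B) = ((Int.gcd y z : ℤ)*y₁)*A + ((Int.gcd y z : ℤ)*z₁)*B := by ring
        _ = y*A + z*B := by rw [← hy₁, ← hz₁]
        _ = (Int.gcd y z : ℤ) * 1 := by rw [mul_one]; exact hby.symm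
      exact mul_left_cancel₀ hgz h2
    refine ⟨-t, 0, s*y₁, -B, s*z₁, A, ?_⟩
    linear_combination (x*s)*huv + hst - t*hby

/-- the compatibility of qdisc with substitution -/
lemma comp_disc (a b c f g h m11 m12 m13 m21 m22 m23 m31 m32 m33 : ℤ) :
    qdisc (qval a b c f g h m11 m21 m31) (qval a b c f g h m12 m22 m32)
      (qval a b c f g h m13 m23 m33)
      (a*m12*m13 + b*m22*m23 + c*m32*m33 + f*(m22*m33+m32*m23) + g*(m12*m33+m32*m13) + h*(m12*m23+m22*m13))
      (a*m11*m13 + b*m21*m23 + c*m31*m33 + f*(m21*m33+m31*m23) + g*(m11*m33+m31*m13) + h*(m11*m23+m21*m13))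
      (a*m11*m12 + b*m21*m22 + c*m31*m32 + f*(m21*m32+m31*m22) + g*(m11*m32+m31*m12) + h*(m11*m22+m21*m12))
    = qdisc a b c f g h *
      (m11*(m22*m33 - m23*m32) - m12*(m21*m33 - m23*m31) + m13*(m21*m32 - m22*m31))^2 := by
  unfold qdisc qval; ring

lemma comp_val (a b c f g h m11 m12 m13 m21 m22 m23 m31 m32 m33 U V W : ℤ) :
    qval (qval a b c f g h m11 m21 m31) (qval a b c f g h m12 m22 m32)
      (qval a b c f g h m13 m23 m33)
      (a*m12*m13 + b*m22*m23 + c*m32*m33 + f*(m22*m33+m32*m23) + g*(m12*m33+m32*m13) + h*(m12*m23+m22*m13))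
      (a*m11*m13 + b*m21*m23 + c*m31*m33 + f*(m21*m33+m31*m23) + g*(m11*m33+m31*m13) + h*(m11*m23+m21*m13))
      (a*m11*m12 + b*m21*m22 + c*m31*m32 + f*(m21*m32+m31*m22) + g*(m11*m32+m31*m12) + h*(m11*m22+m21*m12))
      U V W
    = qval a b c f g h (m11*U + m12*V + m13*W) (m21*U + m22*V + m23*W) (m31*U + m32*V + m33*W) := by
  unfold qval; ring
set_option maxHeartbeats 1600000 in
/-- Main reduction theorem: a positive definite integral ternary form of discriminant 1
represents only sums of three squares. -/
theorem qform_rep (a b c f g h : ℤ)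
    (hdisc : qdisc a b c f g h = 1)
    (hpos : ∀ x y z : ℤ, ¬(x = 0 ∧ y = 0 ∧ z = 0) → 0 < qval a b c f g h x y z)
    (k x y z : ℤ) (hk : qval a b c f g h x y z = k) :
    ∃ s t u : ℤ, k = s^2 + t^2 + u^2 := by
  classical
  -- the minimum of the form
  let P : ℕ → Prop := fun N => ∃ X Y Z : ℤ, ¬(X = 0 ∧ Y = 0 ∧ Z = 0) ∧
    qval a b c f g h X Y Z = (N : ℤ)
  have hex : ∃ N : ℕ, P N := by
    refine ⟨(qval a b c f g h 1 0 0).toNat, 1, 0, 0, by simp, ?_⟩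
    rw [Int.toNat_of_nonneg (hpos 1 0 0 (by simp)).le]
  have hspec : P (Nat.find hex) := Nat.find_spec hex
  obtain ⟨m, hmdef⟩ : ∃ M : ℕ, M = Nat.find hex := ⟨_, rfl⟩
  rw [← hmdef] at hspec
  obtain ⟨x₀, y₀, z₀, hv0, hval0⟩ := hspec
  have hm_min : ∀ X Y Z : ℤ, ¬(X = 0 ∧ Y = 0 ∧ Z = 0) → (m:ℤ) ≤ qval a b c f g h X Y Z := by
    intro X Y Z hne
    have hq := hpos X Y Z hne
    have hmem : P (qval a b c f g h X Y Z).toNat :=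
      ⟨X, Y, Z, hne, (Int.toNat_of_nonneg hq.le).symm⟩
    have h2 : Nat.find hex ≤ (qval a b c f g h X Y Z).toNat := Nat.find_min' hex hmem
    rw [← hmdef] at h2
    omega
  have hm_pos : 0 < (m:ℤ) := by
    have := hpos x₀ y₀ z₀ hv0; omega
  -- the minimal vector is primitive
  have hprim : Int.gcd x₀ (Int.gcd y₀ z₀ : ℤ) = 1 := by
    obtain ⟨x₁, hx₁⟩ : ((Int.gcd x₀ (Int.gcd y₀ z₀ : ℤ) : ℤ)) ∣ x₀ := Int.gcd_dvd_left _ _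
    have hdy : ((Int.gcd x₀ (Int.gcd y₀ z₀ : ℤ) : ℤ)) ∣ (Int.gcd y₀ z₀ : ℤ) := Int.gcd_dvd_right _ _
    obtain ⟨y₁, hy₁⟩ : ((Int.gcd x₀ (Int.gcd y₀ z₀ : ℤ) : ℤ)) ∣ y₀ := hdy.trans (Int.gcd_dvd_left _ _)
    obtain ⟨z₁, hz₁⟩ : ((Int.gcd x₀ (Int.gcd y₀ z₀ : ℤ) : ℤ)) ∣ z₀ := hdy.trans (Int.gcd_dvd_right _ _)
    obtain ⟨d, hd⟩ : ∃ d : ℕ, d = Int.gcd x₀ (Int.gcd y₀ z₀ : ℤ) := ⟨_, rfl⟩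
    rw [← hd] at hx₁ hy₁ hz₁
    have hd0 : d ≠ 0 := by
      intro h0
      rw [h0] at hx₁ hy₁ hz₁
      push_cast at hx₁ hy₁ hz₁
      exact hv0 ⟨by omega, by omega, by omega⟩
    have hne1 : ¬(x₁ = 0 ∧ y₁ = 0 ∧ z₁ = 0) := by
      rintro ⟨h1, h2, h3⟩
      rw [h1] at hx₁; rw [h2] at hy₁; rw [h3] at hz₁
      exact hv0 ⟨by omega, by omega, by omega⟩
    have hfac : (m:ℤ) = (d:ℤ)^2 * qval a b c f g h x₁ y₁ z₁ := by
      rw [← hval0, hx₁, hy₁, hz₁]; unfold qval; ring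
    have hge := hm_min x₁ y₁ z₁ hne1
    have hd1 : (1:ℤ) ≤ (d:ℤ) := by exact_mod_cast Nat.one_le_iff_ne_zero.mpr hd0
    have hQpos : 0 < qval a b c f g h x₁ y₁ z₁ := lt_of_lt_of_le hm_pos hge
    have hmul : (d:ℤ)^2 * qval a b c f g h x₁ y₁ z₁ ≤ 1 * qval a b c f g h x₁ y₁ z₁ := by
      rw [one_mul, ← hfac]; exact hge
    have hd2 : (d:ℤ)^2 ≤ 1 := le_of_mul_le_mul_right hmul hQpos
    have hdeq : (d:ℤ) = 1 := by nlinarith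
    rw [← hd]; exact_mod_cast hdeq
  -- complete to a unimodular matrix
  obtain ⟨t12, t13, t22, t23, t32, t33, hdet3⟩ := completion x₀ y₀ z₀ hprim
  -- the substituted form F₁
  obtain ⟨b₁, hb₁⟩ : ∃ B : ℤ, B = qval a b c f g h t12 t22 t32 := ⟨_, rfl⟩
  obtain ⟨c₁, hc₁⟩ : ∃ C : ℤ, C = qval a b c f g h t13 t23 t33 := ⟨_, rfl⟩
  obtain ⟨f₁, hf₁⟩ : ∃ F : ℤ, F = a*t12*t13 + b*t22*t23 + c*t32*t33 + f*(t22*t33+t32*t23)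
      + g*(t12*t33+t32*t13) + h*(t12*t23+t22*t13) := ⟨_, rfl⟩
  obtain ⟨g₁, hg₁⟩ : ∃ G : ℤ, G = a*x₀*t13 + b*y₀*t23 + c*z₀*t33 + f*(y₀*t33+z₀*t23)
      + g*(x₀*t33+z₀*t13) + h*(x₀*t23+y₀*t13) := ⟨_, rfl⟩
  obtain ⟨h₁, hh₁⟩ : ∃ H : ℤ, H = a*x₀*t12 + b*y₀*t22 + c*z₀*t32 + f*(y₀*t32+z₀*t22)
      + g*(x₀*t32+z₀*t12) + h*(x₀*t22+y₀*t12) := ⟨_, rfl⟩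
  have hval_comp : ∀ U V W : ℤ, qval ((m:ℤ)) b₁ c₁ f₁ g₁ h₁ U V W =
      qval a b c f g h (x₀*U + t12*V + t13*W) (y₀*U + t22*V + t23*W) (z₀*U + t32*V + t33*W) := by
    intro U V W
    have := comp_val a b c f g h x₀ t12 t13 y₀ t22 t23 z₀ t32 t33 U V W
    rw [hval0] at this
    rw [hb₁, hc₁, hf₁, hg₁, hh₁, ← this]
  have hdisc_comp : qdisc ((m:ℤ)) b₁ c₁ f₁ g₁ h₁ = 1 := by
    have := comp_disc a b c f g h x₀ t12 t13 y₀ t22 t23 z₀ t32 t33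
    rw [hval0, hdisc, hdet3] at this
    rw [hb₁, hc₁, hf₁, hg₁, hh₁]
    rw [this]; ring
  have hmin₁ : ∀ U V W : ℤ, ¬(U = 0 ∧ V = 0 ∧ W = 0) → (m:ℤ) ≤ qval ((m:ℤ)) b₁ c₁ f₁ g₁ h₁ U V W := by
    intro U V W hne
    rw [hval_comp]
    apply hm_min
    rintro ⟨h1, h2, h3⟩
    exact hne (inj3 x₀ y₀ z₀ t12 t13 t22 t23 t32 t33 hdet3 U V W h1 h2 h3)
  -- Hermite step: show m = 1
  have hK_lower : ∀ V W : ℤ, ¬(V = 0 ∧ W = 0) →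
      3*(m:ℤ)^2 ≤ 4*(((m:ℤ)*b₁ - h₁^2)*V^2 + 2*((m:ℤ)*f₁ - g₁*h₁)*V*W + ((m:ℤ)*c₁ - g₁^2)*W^2) := by
    intro V W hvw
    obtain ⟨U, L, hL, hL1, hL2⟩ : ∃ U L : ℤ, (m:ℤ)*U + h₁*V + g₁*W = L ∧ -(m:ℤ) ≤ 2*L ∧ 2*L ≤ (m:ℤ) := by
      have h1 := Int.emod_add_mul_ediv (h₁*V + g₁*W) (m:ℤ)
      have h2 := Int.emod_nonneg (h₁*V + g₁*W) (by omega : (m:ℤ) ≠ 0)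
      have h3 := Int.emod_lt_of_pos (h₁*V + g₁*W) hm_pos
      by_cases hc : 2*((h₁*V + g₁*W) % (m:ℤ)) ≤ (m:ℤ)
      · exact ⟨-((h₁*V + g₁*W)/(m:ℤ)), (h₁*V + g₁*W) % (m:ℤ), by linear_combination -h1, by linarith, hc⟩
      · exact ⟨-((h₁*V + g₁*W)/(m:ℤ)) - 1, (h₁*V + g₁*W) % (m:ℤ) - (m:ℤ), by linear_combination -h1,
          by omega, by omega⟩
    have hKid : (m:ℤ) * qval ((m:ℤ)) b₁ c₁ f₁ g₁ h₁ U V W =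
        ((m:ℤ)*U + h₁*V + g₁*W)^2 + (((m:ℤ)*b₁ - h₁^2)*V^2 + 2*((m:ℤ)*f₁ - g₁*h₁)*V*W + ((m:ℤ)*c₁ - g₁^2)*W^2) := by
      unfold qval; ring
    have hge := hmin₁ U V W (by rintro ⟨h1, h2, h3⟩; exact hvw ⟨h2, h3⟩)
    rw [hL] at hKid
    have h4 : (2*L)^2 ≤ (m:ℤ)^2 := sq_le_sq' hL1 hL2
    have h5 : (m:ℤ)*(m:ℤ) ≤ (m:ℤ) * qval ((m:ℤ)) b₁ c₁ f₁ g₁ h₁ U V W :=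
      mul_le_mul_of_nonneg_left hge hm_pos.le
    nlinarith [hKid, h4, h5]
  have hdK : ((m:ℤ)*b₁ - h₁^2)*((m:ℤ)*c₁ - g₁^2) - ((m:ℤ)*f₁ - g₁*h₁)^2 = (m:ℤ) := by
    have : qdisc ((m:ℤ)) b₁ c₁ f₁ g₁ h₁ = 1 := hdisc_comp
    unfold qdisc at this
    linear_combination (m:ℤ) * this
  have hka_pos : 0 < (m:ℤ)*b₁ - h₁^2 := by
    have := hK_lower 1 0 (by simp)
    nlinarith
  obtain ⟨V₀, W₀, hvw0, hKpos, hKbound⟩ := binary_small ((m:ℤ)*b₁ - h₁^2) ((m:ℤ)*f₁ - g₁*h₁)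
    ((m:ℤ)*c₁ - g₁^2) hka_pos (by rw [hdK]; exact hm_pos)
  rw [hdK] at hKbound
  have hKlow := hK_lower V₀ W₀ hvw0
  have hm1 : (m:ℤ) = 1 := by nlinarith
  -- now the form F₁ has leading coefficient 1; split off the binary part
  rw [hm1] at hval_comp hdisc_comp
  obtain ⟨U, V, W, hU, hV, hW⟩ := solve3 x₀ y₀ z₀ t12 t13 t22 t23 t32 t33 hdet3 x y z
  have hrep : k = qval 1 b₁ c₁ f₁ g₁ h₁ U V W := by
    rw [hval_comp, hU, hV, hW, hk]
  have hsplit : k = (U + h₁*V + g₁*W)^2 + ((b₁ - h₁^2)*V^2 + 2*(f₁ - g₁*h₁)*V*W + (c₁ - g₁^2)*W^2) := by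
    rw [hrep]; unfold qval; ring
  have hBdet : (b₁ - h₁^2)*(c₁ - g₁^2) - (f₁ - g₁*h₁)^2 = 1 := by
    unfold qdisc at hdisc_comp
    linear_combination hdisc_comp
  have hBa : 0 < b₁ - h₁^2 := by rw [hm1] at hka_pos; linarith
  obtain ⟨s, t, hst⟩ := binary_det_one (b₁ - h₁^2) (f₁ - g₁*h₁) (c₁ - g₁^2) hBa hBdet
    ((b₁ - h₁^2)*V^2 + 2*(f₁ - g₁*h₁)*V*W + (c₁ - g₁^2)*W^2) V W rfl
  exact ⟨U + h₁*V + g₁*W, s, t, by rw [hsplit, hst]; ring⟩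

/-- key arithmetic criterion: if there are D,b,c,f with N*b = D+1 and D*c = N*f^2+1,
then N is a sum of three squares -/
lemma key_criterion (N : ℤ) (hN : 1 ≤ N) (D b c f : ℤ) (hD : 0 < D)
    (hb : N * b = D + 1) (hc : D * c = N * f^2 + 1) :
    ∃ x y z : ℤ, N = x^2 + y^2 + z^2 := by
  have hdisc : qdisc N b c f 0 1 = 1 := by
    unfold qdisc
    linear_combination c * hb + hc
  have hpos : ∀ x y z : ℤ, ¬(x = 0 ∧ y = 0 ∧ z = 0) → 0 < qval N b c f 0 1 x y z := by
    apply qval_posdef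
    · omega
    · have : N*b - 1^2 = D := by linarith
      rw [this]; exact hD
    · rw [hdisc]; norm_num
  obtain ⟨s, t, u, hstu⟩ := qform_rep N b c f 0 1 hdisc hpos N 1 0 0 (by unfold qval; ring)
  exact ⟨s, t, u, hstu⟩
/-- from a prime p with J(-n|p) = 1, get f, c with p*c = n*f^2+1 -/
lemma exists_fc (p : ℕ) (hp : p.Prime) (n : ℕ) (hnp : ¬ (p:ℤ) ∣ (n:ℤ))
    (hJ : jacobiSym (-(n:ℤ)) p = 1) : ∃ f c : ℤ, (p:ℤ) * c = (n:ℤ) * f^2 + 1 := by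
  haveI : Fact p.Prime := ⟨hp⟩
  have hsq : IsSquare ((-(n:ℤ) : ℤ) : ZMod p) := ZMod.isSquare_of_jacobiSym_eq_one hJ
  obtain ⟨r, hr⟩ := hsq
  have hn0 : ((n:ℤ) : ZMod p) ≠ 0 := by
    rw [Ne, ZMod.intCast_zmod_eq_zero_iff_dvd]; exact hnp
  have hinv : ((n:ℤ) : ZMod p) * ((n:ℤ) : ZMod p)⁻¹ = 1 := mul_inv_cancel₀ hn0
  set u : ZMod p := r * ((n:ℤ) : ZMod p)⁻¹ with hu
  rw [Int.cast_neg] at hr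
  have key : ((n:ℤ) : ZMod p) * u^2 + 1 = 0 := by
    have h2 : ((n:ℤ) : ZMod p) * u^2 =
        (r*r) * (((n:ℤ) : ZMod p) * ((n:ℤ) : ZMod p)⁻¹) * ((n:ℤ) : ZMod p)⁻¹ := by
      rw [hu]; ring
    rw [hinv, mul_one, ← hr] at h2
    rw [h2, neg_mul, hinv]
    ring
  set f : ℤ := (u.val : ℤ) with hf
  have hfu : ((f:ℤ) : ZMod p) = u := by
    rw [hf]; push_cast; rw [ZMod.natCast_val, ZMod.cast_id]
  have hdvd : (p:ℤ) ∣ (n:ℤ) * f^2 + 1 := by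
    rw [← ZMod.intCast_zmod_eq_zero_iff_dvd]
    push_cast
    rw [hfu]
    exact_mod_cast key
  obtain ⟨c, hc⟩ := hdvd
  exact ⟨f, c, hc.symm⟩

/-- Dirichlet step: find a prime in prescribed residue classes mod 8 and mod n -/
lemma find_prime (n : ℕ) (hn : Odd n) (s : ZMod 8) (t : ZMod n) (hs : IsUnit s)
    (ht : IsUnit t) (B : ℕ) :
    ∃ p : ℕ, p.Prime ∧ B < p ∧ (p : ZMod 8) = s ∧ (p : ZMod n) = t := by
  have hn1 : 1 ≤ n := hn.pos
  have hco : Nat.Coprime 8 n := by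
    have h2 : Nat.Coprime 2 n := Nat.coprime_two_left.mpr hn
    have := Nat.Coprime.pow_left 3 h2
    norm_num at this
    exact this
  haveI : NeZero (8*n) := ⟨by omega⟩
  set e := ZMod.chineseRemainder hco with he
  set a : ZMod (8*n) := e.symm (s, t) with ha
  have hunit : IsUnit a := by
    obtain ⟨us, hus⟩ := hs
    obtain ⟨ut, hut⟩ := ht
    have : IsUnit ((s, t) : ZMod 8 × ZMod n) := by
      refine isUnit_iff_exists_inv.mpr ⟨((us⁻¹ : (ZMod 8)ˣ), (ut⁻¹ : (ZMod n)ˣ)), ?_⟩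
      rw [Prod.mk_mul_mk, ← hus, ← hut, Units.mul_inv, Units.mul_inv]
      rfl
    exact this.map e.symm.toRingHom
  obtain ⟨p, hpB, hpp, hpa⟩ := Nat.forall_exists_prime_gt_and_eq_mod hunit B
  refine ⟨p, hpp, hpB, ?_, ?_⟩ <;>
  · have h1 : e ((p : ZMod (8*n))) = ((p : ZMod 8), (p : ZMod n)) := by
      have h2 : e.toRingHom ((p : ZMod (8*n))) = ((p : ℕ) : ZMod 8 × ZMod n) := map_natCast _ p
      have h3 : ((p : ℕ) : ZMod 8 × ZMod n) = ((p : ZMod 8), (p : ZMod n)) := rfl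
      rw [← h3]
      exact h2
    rw [hpa, ha, RingEquiv.apply_symm_apply] at h1
    have h4 := Prod.mk.injEq .. ▸ h1
    simp only [Prod.mk.injEq] at h1
    tauto
lemma mod8_of_cast (p s : ℕ) (hs : s < 8) (h : (p : ZMod 8) = (s : ZMod 8)) : p % 8 = s := by
  have h2 := (ZMod.natCast_eq_natCast_iff p s 8).mp h
  unfold Nat.ModEq at h2
  omega

lemma dvd_add_one_of_cast (p n : ℕ) (h : (p : ZMod n) = -1) : (n:ℤ) ∣ (p:ℤ)+1 := by
  have h2 : (((p:ℤ)+1 : ℤ) : ZMod n) = 0 := by push_cast; rw [h]; ring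
  exact (ZMod.intCast_zmod_eq_zero_iff_dvd _ n).mp h2

lemma not_dvd_of_lt (p n : ℕ) (hn : 1 ≤ n) (hlt : n < p) : ¬ (p:ℤ) ∣ (n:ℤ) := by
  intro hd
  have h2 : (p:ℤ) ≤ (n:ℤ) := Int.le_of_dvd (by exact_mod_cast hn) hd
  have h3 : p ≤ n := by exact_mod_cast h2
  omega

/-- Three squares theorem for n ≡ 1,2,3,5,6 mod 8 -/
theorem three_squares (n : ℕ)
    (h8 : n % 8 = 1 ∨ n % 8 = 2 ∨ n % 8 = 3 ∨ n % 8 = 5 ∨ n % 8 = 6) :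
    ∃ x y z : ℤ, (n:ℤ) = x^2 + y^2 + z^2 := by
  have hn1 : 1 ≤ n := by omega
  have hNn : (1:ℤ) ≤ (n:ℤ) := by exact_mod_cast hn1
  rcases (by omega : n % 4 = 1 ∨ n % 8 = 3 ∨ n % 8 = 2 ∨ n % 8 = 6) with hc | hc | hc | hc
  · -- Case A : n odd, n ≡ 1 mod 4.  Take p ≡ 1 mod 8, p ≡ -1 mod n, D = p.
    have hodd : Odd n := Nat.odd_iff.mpr (by omega)
    obtain ⟨p, hpp, hpB, hp8, hpn⟩ := find_prime n hodd ((1:ℕ) : ZMod 8) (-1)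
      (by rw [Nat.cast_one]; exact isUnit_one) isUnit_one.neg (8*n)
    have hp8' : p % 8 = 1 := mod8_of_cast p 1 (by norm_num) hp8
    have hp4 : p % 4 = 1 := by omega
    have hpodd : Odd p := Nat.odd_iff.mpr (by omega)
    have hdvd : (n:ℤ) ∣ (p:ℤ)+1 := dvd_add_one_of_cast p n hpn
    have hnp : ¬ (p:ℤ) ∣ (n:ℤ) := not_dvd_of_lt p n hn1 (by omega)
    have hJ : jacobiSym (-(n:ℤ)) p = 1 := by
      rw [jacobiSym.neg _ hpodd, ZMod.χ₄_nat_one_mod_four hp4, one_mul,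
        jacobiSym.quadratic_reciprocity_one_mod_four' hodd hp4,
        jacobiSym.mod_left' (Int.modEq_iff_dvd.mpr (by obtain ⟨k, hk⟩ := hdvd; exact ⟨-k, by linear_combination -hk⟩) :
            (p:ℤ) ≡ -1 [ZMOD (n:ℤ)]),
        jacobiSym.at_neg_one hodd]
      exact ZMod.χ₄_nat_one_mod_four hc
    obtain ⟨f, c, hfc⟩ := exists_fc p hpp n hnp hJ
    obtain ⟨b, hb⟩ := hdvd
    exact key_criterion (n:ℤ) hNn (p:ℤ) b c f (by exact_mod_cast hpp.pos) (by linarith) hfc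
  · -- Case B : n ≡ 3 mod 8.  Take p ≡ 1 mod 8, 2p ≡ -1 mod n, D = 2p.
    have hodd : Odd n := Nat.odd_iff.mpr (by omega)
    have h2u : IsUnit ((2:ℕ) : ZMod n) :=
      (ZMod.isUnit_iff_coprime 2 n).mpr (Nat.coprime_two_left.mpr hodd)
    obtain ⟨p, hpp, hpB, hp8, hpn⟩ := find_prime n hodd ((1:ℕ) : ZMod 8)
      (-(h2u.unit⁻¹ : (ZMod n)ˣ)) (by rw [Nat.cast_one]; exact isUnit_one)
      ((h2u.unit⁻¹).isUnit.neg) (8*n)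
    have hp8' : p % 8 = 1 := mod8_of_cast p 1 (by norm_num) hp8
    have hp4 : p % 4 = 1 := by omega
    have hpodd : Odd p := Nat.odd_iff.mpr (by omega)
    have h2t : ((2:ℕ) : ZMod n) * (p : ZMod n) = -1 := by
      rw [hpn, mul_neg, h2u.mul_val_inv]
    have hdvd : (n:ℤ) ∣ 2*(p:ℤ)+1 := by
      have h2 : ((2*(p:ℤ)+1 : ℤ) : ZMod n) = 0 := by
        push_cast
        rw [show ((2:ZMod n)) = ((2:ℕ) : ZMod n) by push_cast; ring, h2t]
        ring
      exact (ZMod.intCast_zmod_eq_zero_iff_dvd _ n).mp h2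
    have hnp : ¬ (p:ℤ) ∣ (n:ℤ) := not_dvd_of_lt p n hn1 (by omega)
    have hJpn : jacobiSym (p:ℤ) n = 1 := by
      have hmul : jacobiSym ((2:ℤ)*(p:ℤ)) n = jacobiSym 2 n * jacobiSym (p:ℤ) n :=
        jacobiSym.mul_left 2 (p:ℤ) n
      have h2p : jacobiSym ((2:ℤ)*(p:ℤ)) n = -1 := by
        rw [jacobiSym.mod_left' (Int.modEq_iff_dvd.mpr (by obtain ⟨k, hk⟩ := hdvd; exact ⟨-k, by linear_combination -hk⟩) :
            (2*(p:ℤ)) ≡ -1 [ZMOD (n:ℤ)]).symm.symm]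
        rw [jacobiSym.at_neg_one hodd]
        exact ZMod.χ₄_nat_three_mod_four (by omega)
      have h2n : jacobiSym 2 n = -1 := by
        rw [jacobiSym.at_two hodd, ZMod.χ₈_nat_eq_if_mod_eight]
        rw [if_neg (by omega), if_neg (by omega)]
      rw [h2p, h2n] at hmul
      linarith
    have hJ : jacobiSym (-(n:ℤ)) p = 1 := by
      rw [jacobiSym.neg _ hpodd, ZMod.χ₄_nat_one_mod_four hp4, one_mul,
        ← jacobiSym.quadratic_reciprocity_one_mod_four hp4 hodd]
      exact hJpn
    obtain ⟨f, c, hfc⟩ := exists_fc p hpp n hnp hJ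
    -- fix parity of f
    obtain ⟨f', hf'odd, hpf'⟩ : ∃ f' : ℤ, Odd f' ∧ (p:ℤ) ∣ (n:ℤ)*f'^2 + 1 := by
      rcases Int.even_or_odd f with he | ho
      · refine ⟨f + p, ?_, ⟨c + 2*(n:ℤ)*f + (n:ℤ)*(p:ℤ), by linear_combination -hfc⟩⟩
        rcases he with ⟨k, hk⟩
        exact Int.odd_iff.mpr (by omega)
      · exact ⟨f, ho, ⟨c, hfc.symm⟩⟩
    have h2dvd : (2:ℤ) ∣ (n:ℤ)*f'^2 + 1 := by
      have hno : Odd ((n:ℤ)) := Int.odd_iff.mpr (by omega)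
      have := (hno.mul (hf'odd.pow (n := 2)))
      rcases this with ⟨k, hk⟩
      exact ⟨k+1, by omega⟩
    have hcop : IsCoprime (2:ℤ) (p:ℤ) := by
      rw [Int.isCoprime_iff_gcd_eq_one]
      have : Int.gcd ((2:ℕ):ℤ) ((p:ℕ):ℤ) = Nat.gcd 2 p := Int.gcd_natCast_natCast 2 p
      rw [show ((2:ℤ)) = ((2:ℕ):ℤ) by norm_num, this]
      exact Nat.coprime_two_left.mpr hpodd
    obtain ⟨c₂, hc₂⟩ := hcop.mul_dvd h2dvd hpf'
    obtain ⟨b, hb⟩ := hdvd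
    exact key_criterion (n:ℤ) hNn (2*(p:ℤ)) b c₂ f'
      (by have := hpp.pos; omega) (by linarith) (by linarith)
  · -- Case C1 : n ≡ 2 mod 8, n = 2n', n' ≡ 1 mod 4.  p ≡ 1 mod 8, p ≡ -1 mod n', D = p.
    obtain ⟨n', hn'⟩ : ∃ m, n = 2*m := ⟨n/2, by omega⟩
    have hodd' : Odd n' := Nat.odd_iff.mpr (by omega)
    have hc4 : n' % 4 = 1 := by omega
    obtain ⟨p, hpp, hpB, hp8, hpn⟩ := find_prime n' hodd' ((1:ℕ) : ZMod 8) (-1)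
      (by rw [Nat.cast_one]; exact isUnit_one) isUnit_one.neg (8*n)
    have hp8' : p % 8 = 1 := mod8_of_cast p 1 (by norm_num) hp8
    have hp4 : p % 4 = 1 := by omega
    have hpodd : Odd p := Nat.odd_iff.mpr (by omega)
    have hdvd' : (n':ℤ) ∣ (p:ℤ)+1 := dvd_add_one_of_cast p n' hpn
    have hdvd : (n:ℤ) ∣ (p:ℤ)+1 := by
      have hcop : IsCoprime (2:ℤ) ((n':ℕ):ℤ) := by
        rw [Int.isCoprime_iff_gcd_eq_one]
        rw [show ((2:ℤ)) = ((2:ℕ):ℤ) by norm_num, Int.gcd_natCast_natCast]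
        exact Nat.coprime_two_left.mpr hodd'
      have h2d : (2:ℤ) ∣ (p:ℤ)+1 := ⟨((p:ℤ)+1)/2, by omega⟩
      have := hcop.mul_dvd h2d hdvd'
      rw [show ((n:ℕ):ℤ) = 2*((n':ℕ):ℤ) by push_cast [hn']; ring]
      exact this
    have hnp : ¬ (p:ℤ) ∣ (n:ℤ) := not_dvd_of_lt p n hn1 (by omega)
    have hJ : jacobiSym (-(n:ℤ)) p = 1 := by
      have hsplit : (-(n:ℤ)) = (-1) * ((2:ℤ) * ((n':ℕ):ℤ)) := by push_cast [hn']; ring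
      rw [hsplit, jacobiSym.mul_left, jacobiSym.mul_left,
        jacobiSym.at_neg_one hpodd, ZMod.χ₄_nat_one_mod_four hp4,
        jacobiSym.at_two hpodd, ZMod.χ₈_nat_eq_if_mod_eight,
        if_neg (by omega), if_pos (by omega),
        jacobiSym.quadratic_reciprocity_one_mod_four' hodd' hp4,
        jacobiSym.mod_left' (Int.modEq_iff_dvd.mpr (by obtain ⟨k, hk⟩ := hdvd'; exact ⟨-k, by linear_combination -hk⟩) :
            (p:ℤ) ≡ -1 [ZMOD (n':ℤ)]),
        jacobiSym.at_neg_one hodd']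
      rw [ZMod.χ₄_nat_one_mod_four hc4]
      ring
    obtain ⟨f, c, hfc⟩ := exists_fc p hpp n hnp hJ
    obtain ⟨b, hb⟩ := hdvd
    exact key_criterion (n:ℤ) hNn (p:ℤ) b c f (by exact_mod_cast hpp.pos) (by linarith) hfc
  · -- Case C2 : n ≡ 6 mod 8, n = 2n', n' ≡ 3 mod 4.  p ≡ 5 mod 8, p ≡ -1 mod n', D = p.
    obtain ⟨n', hn'⟩ : ∃ m, n = 2*m := ⟨n/2, by omega⟩
    have hodd' : Odd n' := Nat.odd_iff.mpr (by omega)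
    have hc4 : n' % 4 = 3 := by omega
    have h5u : IsUnit ((5:ℕ) : ZMod 8) := by
      refine isUnit_iff_exists_inv.mpr ⟨((5:ℕ) : ZMod 8), by decide⟩
    obtain ⟨p, hpp, hpB, hp8, hpn⟩ := find_prime n' hodd' ((5:ℕ) : ZMod 8) (-1)
      h5u isUnit_one.neg (8*n)
    have hp8' : p % 8 = 5 := mod8_of_cast p 5 (by norm_num) hp8
    have hp4 : p % 4 = 1 := by omega
    have hpodd : Odd p := Nat.odd_iff.mpr (by omega)
    have hdvd' : (n':ℤ) ∣ (p:ℤ)+1 := dvd_add_one_of_cast p n' hpn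
    have hdvd : (n:ℤ) ∣ (p:ℤ)+1 := by
      have hcop : IsCoprime (2:ℤ) ((n':ℕ):ℤ) := by
        rw [Int.isCoprime_iff_gcd_eq_one]
        rw [show ((2:ℤ)) = ((2:ℕ):ℤ) by norm_num, Int.gcd_natCast_natCast]
        exact Nat.coprime_two_left.mpr hodd'
      have h2d : (2:ℤ) ∣ (p:ℤ)+1 := ⟨((p:ℤ)+1)/2, by omega⟩
      have := hcop.mul_dvd h2d hdvd'
      rw [show ((n:ℕ):ℤ) = 2*((n':ℕ):ℤ) by push_cast [hn']; ring]
      exact this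
    have hnp : ¬ (p:ℤ) ∣ (n:ℤ) := not_dvd_of_lt p n hn1 (by omega)
    have hJ : jacobiSym (-(n:ℤ)) p = 1 := by
      have hsplit : (-(n:ℤ)) = (-1) * ((2:ℤ) * ((n':ℕ):ℤ)) := by push_cast [hn']; ring
      rw [hsplit, jacobiSym.mul_left, jacobiSym.mul_left,
        jacobiSym.at_neg_one hpodd, ZMod.χ₄_nat_one_mod_four hp4,
        jacobiSym.at_two hpodd, ZMod.χ₈_nat_eq_if_mod_eight,
        if_neg (by omega), if_neg (by omega),
        jacobiSym.quadratic_reciprocity_one_mod_four' hodd' hp4,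
        jacobiSym.mod_left' (Int.modEq_iff_dvd.mpr (by obtain ⟨k, hk⟩ := hdvd'; exact ⟨-k, by linear_combination -hk⟩) :
            (p:ℤ) ≡ -1 [ZMOD (n':ℤ)]),
        jacobiSym.at_neg_one hodd']
      rw [ZMod.χ₄_nat_three_mod_four hc4]
      ring
    obtain ⟨f, c, hfc⟩ := exists_fc p hpp n hnp hJ
    obtain ⟨b, hb⟩ := hdvd
    exact key_criterion (n:ℤ) hNn (p:ℤ) b c f (by exact_mod_cast hpp.pos) (by linarith) hfc

theorem universal_x2_y2_z2_5w2 (n : ℕ) (hn : 1 ≤ n) :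
    ∃ x y z w : ℤ, (n : ℤ) = x ^ 2 + y ^ 2 + z ^ 2 + 5 * w ^ 2 := by
  induction n using Nat.strong_induction_on with
  | _ n IH =>
    rcases (by omega : 4 ∣ n ∨ n % 8 = 7 ∨
        (n % 8 = 1 ∨ n % 8 = 2 ∨ n % 8 = 3 ∨ n % 8 = 5 ∨ n % 8 = 6)) with h4 | h7 | h8
    · obtain ⟨m, hm⟩ := h4
      have hm1 : 1 ≤ m := by omega
      have hmn : m < n := by omega
      obtain ⟨x, y, z, w, hx⟩ := IH m hmn hm1
      refine ⟨2*x, 2*y, 2*z, 2*w, ?_⟩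
      have : (n:ℤ) = 4*(m:ℤ) := by exact_mod_cast congrArg (Nat.cast : ℕ → ℤ) hm
      rw [this, hx]; ring
    · obtain ⟨x, y, z, hx⟩ := three_squares (n-5) (by omega)
      refine ⟨x, y, z, 1, ?_⟩
      have h5 : ((n-5:ℕ):ℤ) = (n:ℤ) - 5 := by omega
      rw [h5] at hx
      linarith
    · obtain ⟨x, y, z, hx⟩ := three_squares n h8
      exact ⟨x, y, z, 0, by rw [hx]; ring⟩
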